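/- Let q : X → Y be a simplicial map where Y is the nerve of a groupoid (a 1-groupoid). Then q is a simplicial fibration (all relative horn maps d^q_{n,k} : X_n → X_{n,k} ×_{Y_{n,k}} Y_n are surjective) if and only if X is a Kan complex and the two face maps d_1, d_0 : X_1 → X_0 are fiber-wise surjective over d_0, d_1 : Y_1 → Y_0 respectively (i.e., for every x ∈ X_0 and every g ∈ Y_1 with appropriate endpoint q(x), there is a lift in X_1). -/

import Mathlib

open CategoryTheory Simplicial SSet Opposite

namespace Stmt19Aux

open SimplexCategory

lemma len_one : (SimplexCategory.mk 1).len = 1 := rfl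

/-- every simplex of `Λ[1,i]` is constant at `i`. -/
lemma horn_one_const (i : Fin 2) (m : SimplexCategoryᵒᵖ) (α : Λ[1, i].obj m) :
    α.1.down = SimplexCategory.const m.unop (SimplexCategory.mk 1) i := by
  apply SimplexCategory.Hom.ext
  ext j
  show (α.1.down.toOrderHom j : ℕ) = (i : ℕ)
  by_contra hne
  apply α.2
  rw [Set.eq_univ_iff_forall]
  intro b
  rcases eq_or_ne b i with hb | hb
  · exact Or.inr hb
  · refine Or.inl ⟨j, ?_⟩
    show α.1.down.toOrderHom j = b
    have h1 : ((α.1.down.toOrderHom j : Fin _) : ℕ) < 2 := (α.1.down.toOrderHom j).isLt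
    have h2 := b.isLt
    have h3 := i.isLt
    have : (b : ℕ) ≠ (i : ℕ) := fun h => hb (Fin.ext h)
    apply Fin.ext
    omega

/-- the vertex of `Λ[1,i]`. -/
def vtx (i : Fin 2) : Λ[1, i].obj (op (SimplexCategory.mk 0)) := by
  refine ⟨stdSimplex.objEquiv.symm
    (SimplexCategory.const (SimplexCategory.mk 0) (SimplexCategory.mk 1) i), ?_⟩
  intro hu
  rw [Set.eq_univ_iff_forall] at hu
  have hrev : (i.rev : ℕ) = 2 - ((i : ℕ) + 1) := Fin.val_rev i
  have hlt := i.isLt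
  have key : i.rev ≠ i := by
    intro h
    have := congrArg Fin.val h
    rw [hrev] at this
    omega
  rcases hu i.rev with ⟨j, hj⟩ | hj
  · exact key (hj ▸ rfl)
  · exact key hj

lemma vtx_fst (i : Fin 2) :
    (vtx i).1 = ULift.up (SimplexCategory.const (SimplexCategory.mk 0) (SimplexCategory.mk 1) i) :=
  rfl

/-- the constant horn map at a vertex `x`. -/
def vertexMap {X : SSet} (i : Fin 2) (x : X.obj (op (SimplexCategory.mk 0))) : (Λ[1, i] : SSet) ⟶ X where
  app m := TypeCat.ofHom (fun _ => X.map (SimplexCategory.const m.unop (SimplexCategory.mk 0) 0).op x)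
  naturality m m' f := by
    ext α
    have e : (unop m').const (SimplexCategory.mk 0) 0
        = f.unop ≫ (unop m).const (SimplexCategory.mk 0) 0 :=
      (eq_const_to_zero _).symm
    dsimp
    rw [e, op_comp, FunctorToTypes.map_comp_apply]
    rfl

lemma app_up {X : SSet} {n : ℕ} (x : Δ[n] ⟶ X) {m : SimplexCategory}
    (f : m ⟶ SimplexCategory.mk n) :
    x.app (op m) (ULift.up f) = X.map f.op (SSet.yonedaEquiv x) := by
  have h := NatTrans.naturality_apply x f.op ((stdSimplex.objEquiv.symm (𝟙 (SimplexCategory.mk n)) : Δ[n] _⦋n⦌))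
  have e : Δ[n].map f.op ((stdSimplex.objEquiv.symm (𝟙 (SimplexCategory.mk n)) : Δ[n] _⦋n⦌)) = ULift.up f := by
    show ULift.up (f ≫ 𝟙 _) = ULift.up f
    rw [Category.comp_id]
  rw [e] at h
  exact h

lemma symm_comp {X Y : SSet} (q : X ⟶ Y) {n : SimplexCategory} (a : X.obj (op n)) :
    SSet.yonedaEquiv.symm a ≫ q = SSet.yonedaEquiv.symm (q.app _ a) := by
  ext m α
  exact (NatTrans.naturality_apply q α.down.op a)

lemma yonedaEquiv_comp {X Y : SSet} (q : X ⟶ Y) {n : SimplexCategory}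
    (x : stdSimplex.obj n ⟶ X) :
    SSet.yonedaEquiv (x ≫ q) = q.app _ (SSet.yonedaEquiv x) := rfl

end Stmt19Aux

/-- Restriction of a simplex (as a map from the standard simplex) along `α : [k] → [n]`. -/
def restr {X : SSet} {k n : ℕ} (α : SimplexCategory.mk k ⟶ SimplexCategory.mk n)
    (x : Δ[n] ⟶ X) : Δ[k] ⟶ X :=
  SSet.stdSimplex.map α ≫ x

/-- The initial inclusion `σ_k : [k] → [n]`. -/
def initialIncl (k n : ℕ) (h : k ≤ n) : SimplexCategory.mk k ⟶ SimplexCategory.mk n :=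
  SimplexCategory.mkHom
    ⟨fun i => ⟨(i : ℕ), by have := i.isLt; omega⟩,
     fun a b hab => by simp only [Fin.le_def] at hab ⊢; omega⟩

/-- `q : X ⟶ Y` is a simplicial fibration: every relative horn-lifting problem has a solution. -/
def IsFibration {X Y : SSet} (q : X ⟶ Y) : Prop :=
  ∀ (n : ℕ) (i : Fin (n + 2)) (h : (Λ[n + 1, i] : SSet) ⟶ X) (y : Δ[n + 1] ⟶ Y),
    h ≫ q = Λ[n + 1, i].ι ≫ y →
      ∃ x : Δ[n + 1] ⟶ X, Λ[n + 1, i].ι ≫ x = h ∧ x ≫ q = y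

namespace Stmt19Aux

open SimplexCategory

lemma fib_edge {X Y : SSet} (q : X ⟶ Y) (hfib : IsFibration q) (i j : Fin 2)
    (hj : SimplexCategory.δ j = SimplexCategory.const (mk 0) (mk 1) i)
    (x : X.obj (op (mk 0))) (g : Y.obj (op (mk 1)))
    (hx : Y.map (SimplexCategory.δ j).op g = q.app _ x) :
    ∃ x', X.map (SimplexCategory.δ j).op x' = x ∧ q.app _ x' = g := by
  have compat : vertexMap i x ≫ q = Λ[1, i].ι ≫ SSet.yonedaEquiv.symm g := by
    ext m α
    show q.app m (X.map ((unop m).const (mk 0) 0).op x) = Y.map α.1.down.op g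
    rw [FunctorToTypes.naturality, ← hx, ← FunctorToTypes.map_comp_apply, ← op_comp]
    rw [horn_one_const i m α, hj, SimplexCategory.const_comp]
    rfl
  obtain ⟨xh, h1, h2⟩ := hfib 0 i (vertexMap i x) _ compat
  refine ⟨SSet.yonedaEquiv xh, ?_, ?_⟩
  · have e : xh.app (op (mk 0)) (ULift.up (SimplexCategory.δ j))
        = X.map ((mk 0).const (mk 0) 0).op x := by
      rw [hj]
      exact ConcreteCategory.congr_hom (NatTrans.congr_app h1 (op (mk 0))) (vtx i)
    rw [app_up] at e
    rw [e, const_eq_id, op_id, FunctorToTypes.map_id_apply]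
  · have e := congrArg SSet.yonedaEquiv h2
    rw [Equiv.apply_symm_apply] at e
    exact e

lemma edge_fill {X Y : SSet} (q : X ⟶ Y) (i j : Fin 2)
    (hj : SimplexCategory.δ j = SimplexCategory.const (mk 0) (mk 1) i)
    (cond : ∀ (x : X.obj (op (mk 0))) (g : Y.obj (op (mk 1))),
      Y.map (SimplexCategory.δ j).op g = q.app _ x →
      ∃ x', X.map (SimplexCategory.δ j).op x' = x ∧ q.app _ x' = g)
    (h : (Λ[1, i] : SSet) ⟶ X) (y : Δ[1] ⟶ Y) (hc : h ≫ q = Λ[1, i].ι ≫ y) :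
    ∃ x : Δ[1] ⟶ X, Λ[1, i].ι ≫ x = h ∧ x ≫ q = y := by
  set x0 := h.app (op (mk 0)) (vtx i) with hx0
  have hx : Y.map (SimplexCategory.δ j).op (SSet.yonedaEquiv y) = q.app _ x0 := by
    rw [← app_up, hj]
    exact (ConcreteCategory.congr_hom (NatTrans.congr_app hc (op (mk 0))) (vtx i)).symm
  obtain ⟨x', hx'1, hx'2⟩ := cond x0 _ hx
  refine ⟨SSet.yonedaEquiv.symm x', ?_, ?_⟩
  · ext m α
    show X.map α.1.down.op x' = h.app m α
    have hα : α = (Λ[1, i] : SSet).map ((unop m).const (mk 0) 0).op (vtx i) := by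
      apply Subtype.ext
      show α.1 = Δ[1].map ((unop m).const (mk 0) 0).op (vtx i).1
      rw [vtx_fst]
      apply stdSimplex.objEquiv.injective
      show α.1.down = (unop m).const (mk 0) 0 ≫ SimplexCategory.const (mk 0) (mk 1) i
      rw [horn_one_const i m α, SimplexCategory.const_comp]
      rfl
    have e1 : h.app m α = X.map ((unop m).const (mk 0) 0).op x0 := by
      rw [hα]
      exact NatTrans.naturality_apply h _ _
    calc X.map α.1.down.op x'
        = X.map ((unop m).const (mk 0) 0 ≫ SimplexCategory.δ j).op x' := by
          rw [horn_one_const i m α, hj, SimplexCategory.const_comp]; rfl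
      _ = X.map ((unop m).const (mk 0) 0).op (X.map (SimplexCategory.δ j).op x') := by
          rw [op_comp, FunctorToTypes.map_comp_apply]
      _ = X.map ((unop m).const (mk 0) 0).op x0 := by rw [hx'1]
      _ = h.app m α := e1.symm
  · rw [symm_comp, hx'2]
    exact Equiv.symm_apply_apply _ _

lemma hj1 : SimplexCategory.δ (1 : Fin 2) = SimplexCategory.const (mk 0) (mk 1) 0 := by
  apply SimplexCategory.Hom.ext
  ext a
  fin_cases a
  rfl

lemma hj0 : SimplexCategory.δ (0 : Fin 2) = SimplexCategory.const (mk 0) (mk 1) 1 := by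
  apply SimplexCategory.Hom.ext
  ext a
  fin_cases a
  rfl

end Stmt19Aux

/-- `C` is a cleavage for `q`: every relative `(n,k)`-horn with `k < n` has a unique filling
in `C`. -/
def IsCleavage {X Y : SSet} (q : X ⟶ Y) (C : ∀ n, Set (Δ[n] ⟶ X)) : Prop :=
  ∀ (n : ℕ) (i : Fin (n + 2)), (i : ℕ) < n + 1 →
    ∀ (h : (Λ[n + 1, i] : SSet) ⟶ X) (y : Δ[n + 1] ⟶ Y),
      h ≫ q = Λ[n + 1, i].ι ≫ y →
        ∃! x : Δ[n + 1] ⟶ X, x ∈ C (n + 1) ∧ Λ[n + 1, i].ι ≫ x = h ∧ x ≫ q = y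

/-- `C` is flat over `S ⊆ X_0`. -/
def FlatOver {X Y : SSet} (q : X ⟶ Y) (C : ∀ n, Set (Δ[n] ⟶ X)) (S : Set (Δ[0] ⟶ X)) : Prop :=
  ∀ (n : ℕ) (w : Δ[n + 1] ⟶ X), w ∈ C (n + 1) →
    restr (initialIncl 0 (n + 1) (by omega)) w ∈ S →
    (∀ (k : ℕ) (hk : k + 1 ≤ n + 1), restr (initialIncl (k + 1) (n + 1) hk) w ∈ C (k + 1)) →
    (∀ i : Fin (n + 1), restr (SimplexCategory.δ i.succ) w ∈ C n) →
    restr (SimplexCategory.δ (0 : Fin (n + 2))) w ∈ C n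

/-- if `Y` is (the nerve of) a 1-groupoid, then `q : X ⟶ Y` is a simplicial
fibration iff `X` is a Kan complex and the face maps `d_1, d_0 : X_1 → X_0` are fiber-wise
surjective. -/
theorem stmt19 {X Y : SSet} (q : X ⟶ Y)
    (hY1 : ∀ (n : ℕ) (i : Fin (n + 2)) (h : (Λ[n + 1, i] : SSet) ⟶ Y),
      ∃ y : Δ[n + 1] ⟶ Y, Λ[n + 1, i].ι ≫ y = h)
    (hY2 : ∀ (n : ℕ) (i : Fin (n + 3)) (h : (Λ[n + 2, i] : SSet) ⟶ Y),
      ∃! y : Δ[n + 2] ⟶ Y, Λ[n + 2, i].ι ≫ y = h) :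
    IsFibration q ↔
      ((∀ (n : ℕ) (i : Fin (n + 2)) (h : (Λ[n + 1, i] : SSet) ⟶ X),
          ∃ x : Δ[n + 1] ⟶ X, Λ[n + 1, i].ι ≫ x = h) ∧
       (∀ (x : X.obj (Opposite.op (SimplexCategory.mk 0)))
          (g : Y.obj (Opposite.op (SimplexCategory.mk 1))),
          Y.map (SimplexCategory.δ (1 : Fin 2)).op g =
            q.app (Opposite.op (SimplexCategory.mk 0)) x →
          ∃ x' : X.obj (Opposite.op (SimplexCategory.mk 1)),
            X.map (SimplexCategory.δ (1 : Fin 2)).op x' = x ∧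
            q.app (Opposite.op (SimplexCategory.mk 1)) x' = g) ∧
       (∀ (x : X.obj (Opposite.op (SimplexCategory.mk 0)))
          (g : Y.obj (Opposite.op (SimplexCategory.mk 1))),
          Y.map (SimplexCategory.δ (0 : Fin 2)).op g =
            q.app (Opposite.op (SimplexCategory.mk 0)) x →
          ∃ x' : X.obj (Opposite.op (SimplexCategory.mk 1)),
            X.map (SimplexCategory.δ (0 : Fin 2)).op x' = x ∧
            q.app (Opposite.op (SimplexCategory.mk 1)) x' = g)) := by
  constructor
  · intro hfib
    refine ⟨?_, ?_, ?_⟩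
    · intro n i h
      obtain ⟨y, hy⟩ := hY1 n i (h ≫ q)
      obtain ⟨x, hx1, _⟩ := hfib n i h y hy.symm
      exact ⟨x, hx1⟩
    · intro x g hg
      exact Stmt19Aux.fib_edge q hfib 0 1 Stmt19Aux.hj1 x g hg
    · intro x g hg
      exact Stmt19Aux.fib_edge q hfib 1 0 Stmt19Aux.hj0 x g hg
  · rintro ⟨hKan, hb, hc⟩
    intro n i h y hcomp
    match n, i with
    | 0, i =>
      fin_cases i
      · exact Stmt19Aux.edge_fill q 0 1 Stmt19Aux.hj1 hb h y hcomp
      · exact Stmt19Aux.edge_fill q 1 0 Stmt19Aux.hj0 hc h y hcomp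
    | Nat.succ m, i =>
      obtain ⟨x0, hx0⟩ := hKan (m + 1) i h
      refine ⟨x0, hx0, ?_⟩
      obtain ⟨y0, hy0, huniq⟩ := hY2 m i (h ≫ q)
      have e1 : Λ[m + 2, i].ι ≫ (x0 ≫ q) = h ≫ q := by
        rw [← Category.assoc, hx0]
      have e2 : Λ[m + 2, i].ι ≫ y = h ≫ q := hcomp.symm
      exact (huniq _ e1).trans (huniq _ e2).symm
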